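/- If (x, c) ∈ ℚ² satisfies f_c³(x) = 0 with c ≠ 0, then u = f_c(x)/f_c²(x) and v = x/f_c²(x) are well-defined (f_c²(x) ≠ 0) and satisfy v² = u³ - u + 1. -/

import Mathlib

/-- If `(x, c) ∈ ℚ²` satisfies `f_c³(x) = 0` with `c ≠ 0`, then `f_c²(x) ≠ 0`, so
`u = f_c(x)/f_c²(x)` and `v = x/f_c²(x)` are well-defined, and `v² = u³ - u + 1`. -/
theorem stmt_7 (x c : ℚ) (h : ((x ^ 2 + c) ^ 2 + c) ^ 2 + c = 0) (hc : c ≠ 0) :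
    (x ^ 2 + c) ^ 2 + c ≠ 0 ∧
      (x / ((x ^ 2 + c) ^ 2 + c)) ^ 2 =
        ((x ^ 2 + c) / ((x ^ 2 + c) ^ 2 + c)) ^ 3 -
          (x ^ 2 + c) / ((x ^ 2 + c) ^ 2 + c) + 1 := by
  have hy : (x ^ 2 + c) ^ 2 + c ≠ 0 := by
    intro h0
    apply hc
    rw [h0] at h
    simpa using h
  refine ⟨hy, ?_⟩
  obtain ⟨Y, hY⟩ : ∃ Y, ((x ^ 2 + c) ^ 2 + c) = Y := ⟨_, rfl⟩
  have hc2 : c = -Y ^ 2 := by rw [hY] at h; linarith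
  rw [hY] at hy ⊢
  subst hc2
  field_simp
  linear_combination (-(x ^ 2 - Y ^ 2)) * hY
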